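/- Let λ ∈ ℂ be such that a(z) ≠ λ for every z with |z| = 1, and let w = (1/(2πi)) ∮_{|z|=1} a′(z)/(a(z) − λ) dz, where a′(z) = ∑_{j=-m}^{n} j a_j z^{j−1}. Then w is an integer equal to the winding number of a − λ, and the polynomial b_λ(z) = z^m (a(z) − λ) has exactly m + w roots, counted with multiplicity, in the open unit disk; that is, p(λ) = m + w. -/

import Mathlib

open scoped ENNReal

noncomputable section

/-- The polynomial `b_λ(z) = z^m (a(z) - λ) = ∑_{k=0}^{m+n} a_{k-m} z^k - λ z^m`. -/
def bpoly (m n : ℕ) (a : ℤ → ℂ) (lam : ℂ) : Polynomial ℂ :=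
  (∑ k ∈ Finset.range (m + n + 1), Polynomial.C (a ((k : ℤ) - (m : ℤ))) * Polynomial.X ^ k)
    - Polynomial.C lam * Polynomial.X ^ m

/-- `p(λ)`: the number of roots of `b_λ` in the open unit disk, counted with multiplicity. -/
def rootCount (m n : ℕ) (a : ℤ → ℂ) (lam : ℂ) : ℕ :=
  Multiset.card ((bpoly m n a lam).roots.filter fun z => ‖z‖ < 1)

/-- The value `a(z) = ∑_{k=-m}^{n} a_k z^k` of the Laurent polynomial. -/
def aval (m n : ℕ) (a : ℤ → ℂ) (z : ℂ) : ℂ :=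
  ∑ k ∈ Finset.Icc (-(m : ℤ)) (n : ℤ), a k * z ^ k

/-- The image `a(𝕋)` of the unit circle under the Laurent polynomial `a`. -/
def aCircle (m n : ℕ) (a : ℤ → ℂ) : Set ℂ :=
  {w : ℂ | ∃ z : ℂ, ‖z‖ = 1 ∧ aval m n a z = w}

/-- The Hilbert space `ℓ²` of square-summable complex sequences (0-indexed). -/
abbrev ell2 := lp (fun _ : ℕ => ℂ) 2

/-- The derivative `a′(z) = ∑_{k=-m}^{n} k a_k z^{k-1}` of the Laurent polynomial. -/
def aderiv (m n : ℕ) (a : ℤ → ℂ) (z : ℂ) : ℂ :=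
  ∑ k ∈ Finset.Icc (-(m : ℤ)) (n : ℤ), (k : ℂ) * a k * z ^ (k - 1)


open Polynomial Metric

theorem circleIntegral_add' {f g : ℂ → ℂ} {c : ℂ} {R : ℝ}
    (hf : CircleIntegrable f c R) (hg : CircleIntegrable g c R) :
    (∮ z in C(c, R), (f z + g z)) = (∮ z in C(c, R), f z) + (∮ z in C(c, R), g z) := by
  simp only [circleIntegral, smul_add]
  exact intervalIntegral.integral_add hf.out hg.out

theorem integral_inv_sub' (r : ℂ) (hr : ‖r‖ ≠ 1) :
    (∮ z in C(0, 1), (z - r)⁻¹)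
      = if ‖r‖ < 1 then 2 * Real.pi * Complex.I else 0 := by
  split_ifs with h
  · exact circleIntegral.integral_sub_inv_of_mem_ball (by simpa [Complex.dist_eq] using h)
  · have h1 : 1 < ‖r‖ := lt_of_le_of_ne (not_lt.1 h) (Ne.symm hr)
    have hd : ∀ z ∈ closedBall (0 : ℂ) 1, DifferentiableAt ℂ (fun z => (z - r)⁻¹) z := by
      intro z hz
      have : z ≠ r := by
        intro hzr; subst hzr
        simp only [mem_closedBall, Complex.dist_eq, sub_zero] at hz
        exact absurd (lt_of_lt_of_le h1 hz) (lt_irrefl _)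
      exact (differentiableAt_id.sub_const r).inv (sub_ne_zero.2 this)
    exact Complex.circleIntegral_eq_zero_of_differentiable_on_off_countable zero_le_one
      Set.countable_empty (fun z hz => (hd z hz).continuousAt.continuousWithinAt)
      (fun z hz => hd z (ball_subset_closedBall hz.1))

theorem circleIntegrable_inv_sub' (r : ℂ) (hr : ‖r‖ ≠ 1) :
    CircleIntegrable (fun z => (z - r)⁻¹) 0 1 := by
  refine circleIntegrable_sub_inv_iff.mpr (Or.inr ?_)
  simp only [abs_one, mem_sphere_iff_norm, sub_zero]
  exact hr

theorem integral_multiset' (s : Multiset ℂ) (hs : ∀ r ∈ s, ‖r‖ ≠ 1) :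
    CircleIntegrable (fun z => (s.map fun r => (z - r)⁻¹).sum) 0 1 ∧
    (∮ z in C(0, 1), (s.map fun r => (z - r)⁻¹).sum)
      = (2 * Real.pi * Complex.I) * (Multiset.card (s.filter fun r => ‖r‖ < 1)) := by
  induction s using Multiset.induction_on with
  | empty => simp [circleIntegral]
  | cons r s ih =>
    have hr := hs r (Multiset.mem_cons_self _ _)
    obtain ⟨ih1, ih2⟩ := ih fun x hx => hs x (Multiset.mem_cons_of_mem hx)
    have hri := circleIntegrable_inv_sub' r hr
    simp only [Multiset.map_cons, Multiset.sum_cons]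
    refine ⟨hri.add ih1, ?_⟩
    rw [circleIntegral_add' hri ih1, ih2, integral_inv_sub' r hr, Multiset.filter_cons]
    split_ifs with h <;> simp <;> ring

theorem derivative_prod_eval' (s : Multiset ℂ) (z : ℂ) (hz : ∀ r ∈ s, z ≠ r) :
    (Polynomial.derivative (s.map fun r => X - C r).prod).eval z
      = ((s.map fun r => X - C r).prod).eval z * (s.map fun r => (z - r)⁻¹).sum := by
  induction s using Multiset.induction_on with
  | empty => simp
  | cons r s ih =>
    have hzr : z - r ≠ 0 := sub_ne_zero.2 (hz r (Multiset.mem_cons_self _ _))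
    simp only [Multiset.map_cons, Multiset.prod_cons, Multiset.sum_cons, derivative_mul,
      derivative_sub, derivative_X, derivative_C, sub_zero, one_mul, eval_add, eval_mul,
      eval_sub, eval_X, eval_C]
    rw [ih fun x hx => hz x (Multiset.mem_cons_of_mem hx)]
    field_simp

theorem bpoly_eval_aux (m n : ℕ) (a : ℤ → ℂ) (lam : ℂ) (z : ℂ) :
    (bpoly m n a lam).eval z
      = (∑ k ∈ Finset.range (m + n + 1), a ((k : ℤ) - (m : ℤ)) * z ^ k) - lam * z ^ m := by
  simp [bpoly, eval_finset_sum]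

theorem sum_aux1 (m n : ℕ) (a : ℤ → ℂ) (z : ℂ) (hz : z ≠ 0) :
    (∑ k ∈ Finset.range (m + n + 1), a ((k : ℤ) - (m : ℤ)) * z ^ k)
      = z ^ m * aval m n a z := by
  rw [aval, Finset.mul_sum]
  refine Finset.sum_nbij' (fun k : ℕ => (k : ℤ) - m) (fun k : ℤ => (k + m).toNat)
    ?_ ?_ ?_ ?_ ?_
  · intro k hk; simp only [Finset.mem_range] at hk; simp only [Finset.mem_Icc]; omega
  · intro k hk; simp only [Finset.mem_Icc] at hk; simp only [Finset.mem_range]; omega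
  · intro k hk; simp only [Finset.mem_range] at hk
    show ((k : ℤ) - m + m).toNat = k; omega
  · intro k hk; simp only [Finset.mem_Icc] at hk
    show ((((k + m).toNat : ℕ) : ℤ) - m) = k; omega
  · intro k hk
    simp only [Finset.mem_range] at hk
    show a ((k : ℤ) - m) * z ^ k = z ^ m * (a ((k : ℤ) - m) * z ^ ((k : ℤ) - m))
    rw [zpow_sub₀ hz]
    simp only [zpow_natCast]
    field_simp

theorem sum_aux2 (m n : ℕ) (a : ℤ → ℂ) (z : ℂ) (hz : z ≠ 0) :
    (∑ k ∈ Finset.range (m + n + 1), (((k : ℤ) : ℂ) - (m : ℂ)) * a ((k : ℤ) - (m : ℤ)) * z ^ k)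
      = z ^ (m + 1) * aderiv m n a z := by
  rw [aderiv, Finset.mul_sum]
  refine Finset.sum_nbij' (fun k : ℕ => (k : ℤ) - m) (fun k : ℤ => (k + m).toNat)
    ?_ ?_ ?_ ?_ ?_
  · intro k hk; simp only [Finset.mem_range] at hk; simp only [Finset.mem_Icc]; omega
  · intro k hk; simp only [Finset.mem_Icc] at hk; simp only [Finset.mem_range]; omega
  · intro k hk; simp only [Finset.mem_range] at hk
    show ((k : ℤ) - m + m).toNat = k; omega
  · intro k hk; simp only [Finset.mem_Icc] at hk
    show ((((k + m).toNat : ℕ) : ℤ) - m) = k; omega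
  · intro k hk
    simp only [Finset.mem_range] at hk
    show (((k : ℤ) : ℂ) - (m : ℂ)) * a ((k : ℤ) - m) * z ^ k
        = z ^ (m + 1) * ((((k : ℤ) - m : ℤ) : ℂ) * a ((k : ℤ) - m) * z ^ ((k : ℤ) - m - 1))
    simp only [zpow_sub₀ hz, zpow_natCast, zpow_one]
    field_simp
    push_cast
    ring

theorem bpoly_deriv_aux (m n : ℕ) (hm : 1 ≤ m) (a : ℤ → ℂ) (lam : ℂ) (z : ℂ) (hz : z ≠ 0) :
    z * (Polynomial.derivative (bpoly m n a lam)).eval z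
      = (m : ℂ) * (bpoly m n a lam).eval z + z ^ (m + 1) * aderiv m n a z := by
  have e1 : (Polynomial.derivative (bpoly m n a lam)).eval z
      = (∑ k ∈ Finset.range (m + n + 1), a ((k : ℤ) - (m : ℤ)) * (k : ℂ) * z ^ (k - 1))
        - lam * (m : ℂ) * z ^ (m - 1) := by
    simp only [bpoly, derivative_sub, derivative_sum, derivative_C_mul_X_pow, eval_sub,
      eval_finset_sum, eval_mul, eval_pow, eval_C, eval_X]
  rw [e1, bpoly_eval_aux m n a lam z, ← sum_aux2 m n a z hz]
  have hzm : z * z ^ (m - 1) = z ^ m := by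
    rw [← pow_succ']; congr 1; omega
  have hterm : z * (lam * (m : ℂ) * z ^ (m - 1)) = lam * (m : ℂ) * z ^ m := by
    rw [show z * (lam * (m : ℂ) * z ^ (m - 1)) = lam * (m : ℂ) * (z * z ^ (m - 1)) from by ring,
      hzm]
  have hcong : ∀ k ∈ Finset.range (m + n + 1),
      z * (a ((k : ℤ) - (m : ℤ)) * (k : ℂ) * z ^ (k - 1))
        = (m : ℂ) * (a ((k : ℤ) - (m : ℤ)) * z ^ k)
          + (((k : ℤ) : ℂ) - (m : ℂ)) * a ((k : ℤ) - (m : ℤ)) * z ^ k := by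
    intro k _
    rcases k with _ | j
    · push_cast; ring
    · push_cast
      ring
  rw [mul_sub, Finset.mul_sum, Finset.sum_congr rfl hcong, Finset.sum_add_distrib, hterm,
    mul_sub, Finset.mul_sum]
  push_cast
  ring

/-- if `a(z) ≠ λ` on the unit circle, then the winding-number integral
`(1/(2πi)) ∮_{|z|=1} a′(z)/(a(z) − λ) dz` is an integer `w`, and `b_λ(z) = z^m (a(z) − λ)`
has exactly `m + w` roots (with multiplicity) in the open unit disk, i.e. `p(λ) = m + w`. -/
theorem stmt_0 (m n : ℕ) (hm : 1 ≤ m) (hn : 1 ≤ n) (a : ℤ → ℂ)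
    (ham : a (-(m : ℤ)) ≠ 0) (han : a (n : ℤ) ≠ 0)
    (hsupp : ∀ k : ℤ, (k < -(m : ℤ) ∨ (n : ℤ) < k) → a k = 0)
    (lam : ℂ) (hlam : ∀ z : ℂ, ‖z‖ = 1 → aval m n a z ≠ lam) :
    ∃ w : ℤ,
      (1 / (2 * Real.pi * Complex.I)) *
          (∮ z in C(0, 1), aderiv m n a z / (aval m n a z - lam)) = (w : ℂ) ∧
      (rootCount m n a lam : ℤ) = (m : ℤ) + w := by
  classical
  set b := bpoly m n a lam with hbdef
  have hbeval : ∀ z : ℂ, z ≠ 0 → b.eval z = z ^ m * (aval m n a z - lam) := by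
    intro z hz
    rw [hbdef, bpoly_eval_aux m n a lam z, sum_aux1 m n a z hz]
    ring
  have hcirc : ∀ z : ℂ, ‖z‖ = 1 → b.eval z ≠ 0 := by
    intro z hz
    have hz0 : z ≠ 0 := fun h => by simp [h] at hz
    rw [hbeval z hz0]
    exact mul_ne_zero (pow_ne_zero _ hz0) (sub_ne_zero.2 (hlam z hz))
  have hroots : ∀ r ∈ b.roots, ‖r‖ ≠ 1 := by
    intro r hr h1
    exact hcirc r h1 (Polynomial.mem_roots'.1 hr).2
  have hpoint : Set.EqOn (fun z => aderiv m n a z / (aval m n a z - lam))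
      (fun z => (Multiset.map (fun r => (z - r)⁻¹) b.roots).sum + (-(m : ℂ)) * z⁻¹)
      (Metric.sphere (0 : ℂ) 1) := by
    intro z hzs
    have hz : ‖z‖ = 1 := by simpa [Complex.dist_eq] using hzs
    have hz0 : z ≠ 0 := fun h => by simp [h] at hz
    have hD : aval m n a z - lam ≠ 0 := sub_ne_zero.2 (hlam z hz)
    have hbz : b.eval z ≠ 0 := hcirc z hz
    have hzr : ∀ r ∈ b.roots, z ≠ r := by
      intro r hr he
      exact hbz (he ▸ (Polynomial.mem_roots'.1 hr).2)
    have hfac : b = Polynomial.C b.leadingCoeff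
        * (Multiset.map (fun r => Polynomial.X - Polynomial.C r) b.roots).prod :=
      Polynomial.Splits.eq_prod_roots (IsAlgClosed.splits b)
    set S : ℂ := (Multiset.map (fun r => (z - r)⁻¹) b.roots).sum with hSdef
    have hds : (Polynomial.derivative b).eval z = b.eval z * S := by
      conv_lhs => rw [hfac]
      conv_rhs => rw [hfac]
      rw [Polynomial.derivative_mul, Polynomial.derivative_C]
      simp only [zero_mul, Polynomial.eval_add, Polynomial.eval_mul, Polynomial.eval_C, zero_add]
      rw [derivative_prod_eval' b.roots z hzr, hSdef]
      ring
    have h2 := bpoly_deriv_aux m n hm a lam z hz0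
    rw [← hbdef, hds, hbeval z hz0] at h2
    have hzm : (z : ℂ) ^ m ≠ 0 := pow_ne_zero _ hz0
    have hcancel : z * z⁻¹ = 1 := mul_inv_cancel₀ hz0
    show aderiv m n a z / (aval m n a z - lam) = S + (-(m : ℂ)) * z⁻¹
    rw [div_eq_iff hD]
    apply mul_left_cancel₀ hzm
    apply mul_left_cancel₀ hz0
    linear_combination (m : ℂ) * z ^ m * (aval m n a z - lam) * hcancel - h2
  obtain ⟨hSint, hSval⟩ := integral_multiset' b.roots hroots
  have hinv : CircleIntegrable (fun z : ℂ => z⁻¹) 0 1 := by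
    have := circleIntegrable_inv_sub' 0 (by simp)
    simpa using this
  have hminv : CircleIntegrable (fun z : ℂ => (-(m : ℂ)) * z⁻¹) 0 1 :=
    IntervalIntegrable.const_mul hinv (-(m : ℂ))
  have hIz : (∮ z in C(0, 1), (z : ℂ)⁻¹) = 2 * Real.pi * Complex.I := by
    have := circleIntegral.integral_sub_center_inv (0 : ℂ) (one_ne_zero)
    simpa using this
  refine ⟨(rootCount m n a lam : ℤ) - (m : ℤ), ?_, by ring⟩
  rw [circleIntegral.integral_congr zero_le_one hpoint,
    circleIntegral_add' hSint hminv, hSval, circleIntegral.integral_const_mul, hIz]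
  have hrc : rootCount m n a lam
      = Multiset.card (Multiset.filter (fun r => ‖r‖ < 1) b.roots) := rfl
  rw [← hrc]
  have hπ : (2 * (Real.pi : ℂ) * Complex.I : ℂ) ≠ 0 := by
    simp [Real.pi_ne_zero, Complex.I_ne_zero, Complex.ofReal_ne_zero]
  push_cast
  field_simp
  ring
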